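/- Let K be a Borel measurable subset of ℝ and let f, g : K → ℝ be non-negative measurable functions in L²(γ₁, K), where γ₁ is the one-dimensional standard Gaussian measure. Let f*, g* denote their Ehrhard rearrangements (defined on the half-line H_K = (−∞, ψ^{-1}(γ₁(K))] by requiring that the level set {f* > t} is the left half-line of the same Gaussian measure as {f > t}). Then ∫_K f g dγ₁ ≤ ∫_{H_K} f* g* dγ₁. -/

import Mathlib

open MeasureTheory Real Set

/-- The one-dimensional standard Gaussian measure. -/
noncomputable def stdGaussian1 : Measure ℝ :=
  volume.withDensity fun x =>
    ENNReal.ofReal ((2 * π) ^ (-(1 : ℝ) / 2) * Real.exp (-x ^ 2 / 2))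

/-- Double layer-cake formula: the integral of a product of two nonnegative functions over a
set equals the double integral over `(0,∞)²` of the measure of the intersection of the
superlevel sets. -/
lemma double_layer (μ : Measure ℝ) (A : Set ℝ) (hA : MeasurableSet A)
    (f g : ℝ → ℝ) (hf : Measurable f) (hg : Measurable g)
    (hf0 : ∀ x ∈ A, 0 ≤ f x) (hg0 : ∀ x ∈ A, 0 ≤ g x) :
    ∫⁻ x in A, ENNReal.ofReal (f x) * ENNReal.ofReal (g x) ∂μ
      = ∫⁻ s in Ioi (0:ℝ), ∫⁻ t in Ioi (0:ℝ),
          μ ({x ∈ A | s < f x} ∩ {x ∈ A | t < g x}) := by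
  set ν := (μ.restrict A).withDensity (fun x => ENNReal.ofReal (g x)) with hν
  have hmemA : ∀ᵐ x ∂(μ.restrict A), x ∈ A := ae_restrict_mem hA
  have step1 : ∫⁻ x in A, ENNReal.ofReal (f x) * ENNReal.ofReal (g x) ∂μ
      = ∫⁻ x, ENNReal.ofReal (f x) ∂ν := by
    rw [hν, lintegral_withDensity_eq_lintegral_mul _ hg.ennreal_ofReal hf.ennreal_ofReal]
    exact lintegral_congr fun x => mul_comm _ _
  have hfnn : 0 ≤ᵐ[ν] f :=
    (withDensity_absolutelyContinuous (μ.restrict A) _).ae_le (hmemA.mono fun x hx => hf0 x hx)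
  have step2 : ∫⁻ x, ENNReal.ofReal (f x) ∂ν
      = ∫⁻ s in Ioi (0:ℝ), ν {x | s < f x} :=
    lintegral_eq_lintegral_meas_lt ν hfnn hf.aemeasurable
  have step3 : ∀ s : ℝ, ν {x | s < f x}
      = ∫⁻ t in Ioi (0:ℝ), μ ({x ∈ A | s < f x} ∩ {x ∈ A | t < g x}) := by
    intro s
    have hms : MeasurableSet {x | s < f x} := measurableSet_lt measurable_const hf
    have hres : (μ.restrict A).restrict {x | s < f x} = μ.restrict ({x | s < f x} ∩ A) :=
      Measure.restrict_restrict hms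
    have hgnn : 0 ≤ᵐ[μ.restrict ({x | s < f x} ∩ A)] g :=
      (ae_restrict_mem (hms.inter hA)).mono fun x hx => hg0 x hx.2
    rw [hν, withDensity_apply _ hms]
    calc ∫⁻ x in {x | s < f x}, ENNReal.ofReal (g x) ∂(μ.restrict A)
        = ∫⁻ x, ENNReal.ofReal (g x) ∂(μ.restrict ({x | s < f x} ∩ A)) := by rw [← hres]
      _ = ∫⁻ t in Ioi (0:ℝ), (μ.restrict ({x | s < f x} ∩ A)) {x | t < g x} :=
          lintegral_eq_lintegral_meas_lt _ hgnn hg.aemeasurable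
      _ = ∫⁻ t in Ioi (0:ℝ), μ ({x ∈ A | s < f x} ∩ {x ∈ A | t < g x}) := by
          refine lintegral_congr fun t => ?_
          rw [Measure.restrict_apply (measurableSet_lt measurable_const hg)]
          congr 1
          ext x
          simp only [mem_inter_iff, mem_setOf_eq, mem_sep_iff]
          tauto
  rw [step1, step2]
  exact lintegral_congr fun s => step3 s

theorem stmt5 (K : Set ℝ) (hK : MeasurableSet K)
    (f g fstar gstar : ℝ → ℝ)
    (hf0 : ∀ x ∈ K, 0 ≤ f x) (hg0 : ∀ x ∈ K, 0 ≤ g x)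
    (hfs0 : ∀ x, 0 ≤ fstar x) (hgs0 : ∀ x, 0 ≤ gstar x)
    (hfm : Measurable f) (hgm : Measurable g)
    (hfsm : Measurable fstar) (hgsm : Measurable gstar)
    (hfL2 : MemLp f 2 (stdGaussian1.restrict K))
    (hgL2 : MemLp g 2 (stdGaussian1.restrict K))
    (c : ℝ) (hc : stdGaussian1 (Set.Iic c) = stdGaussian1 K)
    (hfanti : AntitoneOn fstar (Set.Iic c))
    (hganti : AntitoneOn gstar (Set.Iic c))
    (hflev : ∀ t : ℝ, 0 ≤ t →
      stdGaussian1 {x ∈ Set.Iic c | t < fstar x} = stdGaussian1 {x ∈ K | t < f x})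
    (hglev : ∀ t : ℝ, 0 ≤ t →
      stdGaussian1 {x ∈ Set.Iic c | t < gstar x} = stdGaussian1 {x ∈ K | t < g x})
    (hint1 : IntegrableOn (fun x => f x * g x) K stdGaussian1)
    (hint2 : IntegrableOn (fun x => fstar x * gstar x) (Set.Iic c) stdGaussian1) :
    (∫ x in K, f x * g x ∂stdGaussian1)
      ≤ ∫ x in Set.Iic c, fstar x * gstar x ∂stdGaussian1 := by
  set γ := stdGaussian1 with hγ
  -- key pointwise measure inequality
  have key : ∀ s t : ℝ, 0 ≤ s → 0 ≤ t →
      γ ({x ∈ K | s < f x} ∩ {x ∈ K | t < g x})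
        ≤ γ ({x ∈ Set.Iic c | s < fstar x} ∩ {x ∈ Set.Iic c | t < gstar x}) := by
    intro s t hs ht
    have hAls : IsLowerSet {x ∈ Set.Iic c | s < fstar x} := by
      intro a b hba ha
      have hbc : b ∈ Set.Iic c := le_trans hba ha.1
      exact ⟨hbc, lt_of_lt_of_le ha.2 (hfanti hbc ha.1 hba)⟩
    have hBls : IsLowerSet {x ∈ Set.Iic c | t < gstar x} := by
      intro a b hba ha
      have hbc : b ∈ Set.Iic c := le_trans hba ha.1
      exact ⟨hbc, lt_of_lt_of_le ha.2 (hganti hbc ha.1 hba)⟩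
    rcases hAls.total hBls with h | h
    · calc γ ({x ∈ K | s < f x} ∩ {x ∈ K | t < g x})
          ≤ γ {x ∈ K | s < f x} := measure_mono inter_subset_left
        _ = γ {x ∈ Set.Iic c | s < fstar x} := (hflev s hs).symm
        _ = γ ({x ∈ Set.Iic c | s < fstar x} ∩ {x ∈ Set.Iic c | t < gstar x}) := by
            rw [inter_eq_left.mpr h]
    · calc γ ({x ∈ K | s < f x} ∩ {x ∈ K | t < g x})
          ≤ γ {x ∈ K | t < g x} := measure_mono inter_subset_right
        _ = γ {x ∈ Set.Iic c | t < gstar x} := (hglev t ht).symm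
        _ = γ ({x ∈ Set.Iic c | s < fstar x} ∩ {x ∈ Set.Iic c | t < gstar x}) := by
            rw [inter_eq_right.mpr h]
  -- core lintegral inequality
  have core : ∫⁻ x in K, ENNReal.ofReal (f x) * ENNReal.ofReal (g x) ∂γ
      ≤ ∫⁻ x in Set.Iic c, ENNReal.ofReal (fstar x) * ENNReal.ofReal (gstar x) ∂γ := by
    rw [double_layer γ K hK f g hfm hgm hf0 hg0,
      double_layer γ (Set.Iic c) measurableSet_Iic fstar gstar hfsm hgsm
        (fun x _ => hfs0 x) (fun x _ => hgs0 x)]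
    refine lintegral_mono_ae ?_
    filter_upwards [ae_restrict_mem measurableSet_Ioi] with s hs
    refine lintegral_mono_ae ?_
    filter_upwards [ae_restrict_mem measurableSet_Ioi] with t ht
    exact key s t (le_of_lt hs) (le_of_lt ht)
  -- convert Bochner integrals to lintegrals
  have h1 : ∫ x in K, f x * g x ∂γ
      = (∫⁻ x in K, ENNReal.ofReal (f x * g x) ∂γ).toReal :=
    integral_eq_lintegral_of_nonneg_ae
      ((ae_restrict_mem hK).mono fun x hx => mul_nonneg (hf0 x hx) (hg0 x hx))
      hint1.aestronglyMeasurable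
  have h2 : ∫ x in Set.Iic c, fstar x * gstar x ∂γ
      = (∫⁻ x in Set.Iic c, ENNReal.ofReal (fstar x * gstar x) ∂γ).toReal :=
    integral_eq_lintegral_of_nonneg_ae
      (Filter.Eventually.of_forall fun x => mul_nonneg (hfs0 x) (hgs0 x))
      hint2.aestronglyMeasurable
  have e1 : ∫⁻ x in K, ENNReal.ofReal (f x * g x) ∂γ
      = ∫⁻ x in K, ENNReal.ofReal (f x) * ENNReal.ofReal (g x) ∂γ :=
    lintegral_congr_ae ((ae_restrict_mem hK).mono fun x hx => by
      dsimp only; rw [ENNReal.ofReal_mul (hf0 x hx)])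
  have e2 : ∫⁻ x in Set.Iic c, ENNReal.ofReal (fstar x * gstar x) ∂γ
      = ∫⁻ x in Set.Iic c, ENNReal.ofReal (fstar x) * ENNReal.ofReal (gstar x) ∂γ :=
    lintegral_congr fun x => by rw [ENNReal.ofReal_mul (hfs0 x)]
  have htop : ∫⁻ x in Set.Iic c, ENNReal.ofReal (fstar x * gstar x) ∂γ ≠ ⊤ := by
    refine ne_of_lt (lt_of_le_of_lt ?_ hint2.hasFiniteIntegral)
    exact lintegral_mono fun x => Real.ofReal_le_enorm _
  rw [h1, h2, e1]
  refine ENNReal.toReal_mono htop ?_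
  rw [e2]
  exact core
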